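/- Let 0 ≤ κ < η < 1, m ∈ ℕ, and let ν̄ = (1-η)/(1-η^{m+1}) · η^m · (η - κ). Suppose a sequence of nonnegative numbers (a_k) satisfies, for all k ≥ ℓ, a_{k+1} ≤ κ · min{a_{k-m},...,a_k} + ν̄ · Σᵢ₌₀ᵐ a_{k-i}. Then there exists C > 0 such that a_k ≤ C η^k for all k ≥ ℓ, i.e., (a_k) converges r-linearly to zero with rate η. -/

import Mathlib

theorem stmt_8 (a : ℕ → ℝ) (ha : ∀ k, 0 ≤ a k)
    (κ η : ℝ) (hκ0 : 0 ≤ κ) (hκη : κ < η) (hη1 : η < 1)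
    (m ℓ : ℕ) (hmℓ : m ≤ ℓ)
    (ν : ℝ) (hν : ν = (1 - η) / (1 - η ^ (m + 1)) * η ^ m * (η - κ))
    (hrec : ∀ k, ℓ ≤ k →
      a (k + 1) ≤ κ * ((Finset.range (m + 1)).inf' Finset.nonempty_range_add_one
          (fun i => a (k - i))) + ν * ∑ i ∈ Finset.range (m + 1), a (k - i)) :
    ∃ C > 0, ∀ k, ℓ ≤ k → a k ≤ C * η ^ k := by
  have hη0 : 0 < η := lt_of_le_of_lt hκ0 hκη
  have hηm1 : η ^ (m + 1) < 1 := pow_lt_one₀ hη0.le hη1 (Nat.succ_ne_zero m)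
  have d1 : η - 1 ≠ 0 := by intro h; nlinarith
  have d2 : 1 - η ^ (m + 1) ≠ 0 := by intro h; nlinarith
  have hν0 : 0 < ν := by
    rw [hν]
    apply mul_pos (mul_pos (div_pos (by linarith) (by nlinarith)) (pow_pos hη0 m))
    linarith
  -- key algebraic identity
  have hkey : ∀ n, ℓ ≤ n →
      ν * ∑ i ∈ Finset.range (m + 1), η ^ (n - i) = (η - κ) * η ^ n := by
    intro n hn
    have hmn : m ≤ n := le_trans hmℓ hn
    have h1 : ∀ i ∈ Finset.range (m + 1), η ^ (n - i) = η ^ (n - m) * η ^ (m - i) := by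
      intro i hi
      rw [← pow_add]
      congr 1
      simp only [Finset.mem_range] at hi
      omega
    rw [Finset.sum_congr rfl h1, ← Finset.mul_sum]
    have h2 : ∑ i ∈ Finset.range (m + 1), η ^ (m - i) = ∑ i ∈ Finset.range (m + 1), η ^ i := by
      have := Finset.sum_range_reflect (fun j => η ^ j) (m + 1)
      simpa using this
    rw [h2, geom_sum_eq (ne_of_lt hη1), hν]
    have h3 : η ^ n = η ^ m * η ^ (n - m) := by
      rw [← pow_add]; congr 1; omega
    rw [h3]
    field_simp
    ring
  -- constant
  have hne : (Finset.Icc (ℓ - m) ℓ).Nonempty := ⟨ℓ, by simp [Nat.sub_le]⟩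
  set C : ℝ := 1 + (Finset.Icc (ℓ - m) ℓ).sup' hne (fun j => a j / η ^ j) with hC
  clear_value C
  have hsup_le : ∀ j, ℓ - m ≤ j → j ≤ ℓ → a j / η ^ j ≤ C - 1 := by
    intro j h1 h2
    have := Finset.le_sup' (fun j => a j / η ^ j) (Finset.mem_Icc.mpr ⟨h1, h2⟩)
    simp only [hC]; linarith
  have hC0 : 0 < C := by
    have h := hsup_le ℓ (Nat.sub_le ℓ m) le_rfl
    have h1 : 0 ≤ a ℓ / η ^ ℓ := div_nonneg (ha ℓ) (pow_pos hη0 ℓ).le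
    linarith
  refine ⟨C, hC0, ?_⟩
  have main : ∀ k, ℓ - m ≤ k → a k ≤ C * η ^ k := by
    intro k
    induction k using Nat.strong_induction_on with
    | _ k ih =>
      intro hk
      by_cases hkl : k ≤ ℓ
      · -- base case
        have hpow : 0 < η ^ k := pow_pos hη0 k
        have h := hsup_le k hk hkl
        rw [div_le_iff₀ hpow] at h
        nlinarith
      · -- inductive step
        push_neg at hkl
        obtain ⟨n, rfl⟩ : ∃ n, k = n + 1 := ⟨k - 1, by omega⟩
        have hn : ℓ ≤ n := by omega
        have hmn : m ≤ n := le_trans hmℓ hn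
        have hinf : (Finset.range (m + 1)).inf' Finset.nonempty_range_add_one
            (fun i => a (n - i)) ≤ C * η ^ n := by
          have h0 : (0 : ℕ) ∈ Finset.range (m + 1) := by simp
          calc (Finset.range (m + 1)).inf' Finset.nonempty_range_add_one (fun i => a (n - i))
              ≤ a (n - 0) := Finset.inf'_le _ h0
            _ = a n := by norm_num
            _ ≤ C * η ^ n := ih n (by omega) (by omega)
        have hsum : ∑ i ∈ Finset.range (m + 1), a (n - i)
            ≤ C * ∑ i ∈ Finset.range (m + 1), η ^ (n - i) := by
          rw [Finset.mul_sum]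
          apply Finset.sum_le_sum
          intro i hi
          simp only [Finset.mem_range] at hi
          exact ih (n - i) (by omega) (by omega)
        have hr := hrec n hn
        have hκ : κ * ((Finset.range (m + 1)).inf' Finset.nonempty_range_add_one
            (fun i => a (n - i))) ≤ κ * (C * η ^ n) := by
          exact mul_le_mul_of_nonneg_left hinf hκ0
        have hν2 : ν * ∑ i ∈ Finset.range (m + 1), a (n - i)
            ≤ ν * (C * ∑ i ∈ Finset.range (m + 1), η ^ (n - i)) :=
          mul_le_mul_of_nonneg_left hsum hν0.le
        have hk2 : ν * (C * ∑ i ∈ Finset.range (m + 1), η ^ (n - i))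
            = C * ((η - κ) * η ^ n) := by
          rw [show ν * (C * ∑ i ∈ Finset.range (m + 1), η ^ (n - i))
              = C * (ν * ∑ i ∈ Finset.range (m + 1), η ^ (n - i)) by ring, hkey n hn]
        have : a (n + 1) ≤ κ * (C * η ^ n) + C * ((η - κ) * η ^ n) := by
          calc a (n + 1) ≤ _ := hr
            _ ≤ κ * (C * η ^ n) + C * ((η - κ) * η ^ n) := by
                rw [← hk2]; exact add_le_add hκ hν2
        calc a (n + 1) ≤ κ * (C * η ^ n) + C * ((η - κ) * η ^ n) := this
          _ = C * η ^ (n + 1) := by ring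
  intro k hk
  exact main k (le_trans (Nat.sub_le ℓ m) hk)
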